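/- Let x ∈ ℂⁿ and let j be a nonnegative integer. Writing q = ⌊j/n⌋ and r = j mod n, the j-th power of K_x satisfies K_x^j = α_x^q · ( Π_{i=0}^{r−1} D_{π^i(x)} ) · C^r, where the empty product (when r = 0) is the identity matrix. -/

import Mathlib

/-- The `n`-by-`n` cyclic permutation matrix `C` with `(i,j)`-entry `δ_{π(i),j}`,
where `π(i) = (i mod n) + 1` (realized 0-based by `finRotate n : i ↦ i + 1`). -/
noncomputable def cycMat (n : ℕ) : Matrix (Fin n) (Fin n) ℂ :=
  (finRotate n).permMatrix ℂ

/-- `K_x := D_x C`. -/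
noncomputable def Kmat {n : ℕ} (x : Fin n → ℂ) : Matrix (Fin n) (Fin n) ℂ :=
  Matrix.diagonal x * cycMat n

open Matrix in
lemma perm_mul_diag {n : ℕ} (σ : Equiv.Perm (Fin n)) (d : Fin n → ℂ) :
    σ.permMatrix ℂ * diagonal d = diagonal (fun i => d (σ i)) * σ.permMatrix ℂ := by
  rw [Equiv.Perm.permMatrix, PEquiv.toMatrix_toPEquiv_mul, PEquiv.mul_toMatrix_toPEquiv]
  ext i j
  simp only [submatrix_apply, diagonal_apply, id]
  rcases eq_or_ne (σ i) j with h | h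
  · subst h; simp
  · rw [if_neg h, if_neg]
    intro hc
    exact h (by rw [hc]; simp)

lemma cycMat_pow_eq {n : ℕ} (k : ℕ) :
    cycMat n ^ k = ((finRotate n) ^ k).permMatrix ℂ := by
  induction k with
  | zero =>
    show (1 : Matrix (Fin n) (Fin n) ℂ) = _
    rw [pow_zero]
    show _ = ((Equiv.refl (Fin n)).toPEquiv.toMatrix : Matrix (Fin n) (Fin n) ℂ)
    rw [Equiv.toPEquiv_refl, PEquiv.toMatrix_refl]
  | succ k ih =>
    rw [pow_succ', ih, cycMat]
    rw [pow_succ, Equiv.Perm.permMatrix, Equiv.Perm.permMatrix, Equiv.Perm.permMatrix,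
      Equiv.Perm.mul_def, Equiv.toPEquiv_trans, PEquiv.toMatrix_trans]

open Matrix in
lemma cycMat_pow_mul_diag {n : ℕ} (k : ℕ) (d : Fin n → ℂ) :
    cycMat n ^ k * diagonal d = diagonal (fun i => d ((finRotate n ^ k) i)) * cycMat n ^ k := by
  rw [cycMat_pow_eq, perm_mul_diag]

open Matrix in
lemma Kmat_pow_aux {n : ℕ} (x : Fin n → ℂ) (j : ℕ) :
    Kmat x ^ j =
      ((List.range j).map fun i =>
        Matrix.diagonal fun ℓ => x ((finRotate n ^ i) ℓ)).prod * cycMat n ^ j := by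
  induction j with
  | zero => simp
  | succ j ih =>
    rw [pow_succ, ih, Kmat, List.range_succ, List.map_append, List.prod_append]
    simp only [List.map_cons, List.map_nil, List.prod_cons, List.prod_nil, mul_one]
    rw [mul_assoc, mul_assoc, ← mul_assoc (cycMat n ^ j), cycMat_pow_mul_diag]
    simp only [pow_succ, mul_assoc]

open Matrix in
lemma diag_list_prod {n : ℕ} (m : ℕ) (f : ℕ → Fin n → ℂ) :
    ((List.range m).map fun i => diagonal (f i)).prod =
      diagonal (fun ℓ => ∏ i ∈ Finset.range m, f i ℓ) := by
  induction m with
  | zero => simp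
  | succ m ih =>
    rw [List.range_succ, List.map_append, List.prod_append, ih]
    simp [Finset.prod_range_succ, diagonal_mul_diagonal]

open Fin.NatCast in
lemma finRotate_pow_apply {m : ℕ} (i : ℕ) (ℓ : Fin (m + 1)) :
    (finRotate (m + 1) ^ i) ℓ = ℓ + (i : Fin (m + 1)) := by
  induction i with
  | zero => simp
  | succ i ih =>
    rw [pow_succ', Equiv.Perm.mul_apply, finRotate_succ_apply, ih]
    push_cast
    abel

lemma finRotate_pow_n {m : ℕ} : (finRotate (m + 1)) ^ (m + 1) = 1 := by
  ext ℓ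
  rw [finRotate_pow_apply]
  simp

open Matrix Fin.NatCast in
lemma Kmat_pow_n {n : ℕ} (x : Fin n → ℂ) :
    Kmat x ^ n = (∏ k, x k) • (1 : Matrix (Fin n) (Fin n) ℂ) := by
  cases n with
  | zero => exact Subsingleton.elim _ _
  | succ m =>
    rw [Kmat_pow_aux, diag_list_prod, cycMat_pow_eq, finRotate_pow_n]
    have h1 : ((1 : Equiv.Perm (Fin (m+1))).permMatrix ℂ) = 1 := by
      show ((Equiv.refl (Fin (m+1))).toPEquiv.toMatrix : Matrix _ _ ℂ) = 1
      rw [Equiv.toPEquiv_refl, PEquiv.toMatrix_refl]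
    rw [h1, mul_one]
    have h2 : ∀ ℓ : Fin (m+1), (∏ i ∈ Finset.range (m+1), x ((finRotate (m+1) ^ i) ℓ))
        = ∏ k, x k := by
      intro ℓ
      have : ∀ i ∈ Finset.range (m+1), x ((finRotate (m+1) ^ i) ℓ) = x (ℓ + (i : Fin (m+1))) := by
        intro i _; rw [finRotate_pow_apply]
      rw [Finset.prod_congr rfl this, ← Fin.prod_univ_eq_prod_range (fun i => x (ℓ + (i : Fin (m+1))))]
      have : ∀ i : Fin (m+1), x (ℓ + ((i : ℕ) : Fin (m+1))) = x (ℓ + i) := by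
        intro i; rw [Fin.cast_val_eq_self]
      rw [Fintype.prod_congr _ _ this]
      exact Equiv.prod_comp (Equiv.addLeft ℓ) x
    rw [funext h2, ← Matrix.smul_one_eq_diagonal]

/-- For `x ∈ ℂⁿ` and `j ≥ 0`, with `q = ⌊j/n⌋` and `r = j mod n`,
`K_x^j = α_x^q • (Π_{i=0}^{r-1} D_{π^i(x)}) * C^r`, where `α_x = Π_k x_k` and
`π^i(x)` has `ℓ`-th entry `x_{π^i(ℓ)}`; the empty product is the identity. -/
theorem Kmat_pow {n : ℕ} (x : Fin n → ℂ) (j : ℕ) :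
    Kmat x ^ j =
      (∏ k, x k) ^ (j / n) •
        (((List.range (j % n)).map fun i =>
            Matrix.diagonal fun ℓ => x ((finRotate n ^ i) ℓ)).prod * cycMat n ^ (j % n)) := by
  conv_lhs => rw [← Nat.div_add_mod j n, pow_add, pow_mul, Kmat_pow_n, smul_pow, one_pow,
    Kmat_pow_aux, smul_mul_assoc, one_mul]
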